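/- Let d ≥ 2, let U be a d×d complex unitary matrix, and let v ∈ ℝ^d be a unit vector. Then ∫_{O(d)} I(U (Ov)(Ov)ᵀ U†) dμ_O(O) = (d² − |Tr(U†U*)|²)/(2d(d+2)), where (Ov)(Ov)ᵀ is the rank-one projector onto the real unit vector Ov (a real pure state), regarded as a complex matrix. -/

import Mathlib

open MeasureTheory Matrix

noncomputable section

/-- The imaginarity of a complex matrix with respect to the computational basis:
`I(ρ) = (1/4)·‖ρ − ρᵀ‖₂²` where `‖A‖₂² = Tr(A†A)` is the squared Hilbert–Schmidt norm. -/
def Imag {d : ℕ} (ρ : Matrix (Fin d) (Fin d) ℂ) : ℝ :=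
  (1 / 4) * (((ρ - ρᵀ)ᴴ * (ρ - ρᵀ)).trace).re

instance (d : ℕ) : MeasurableSpace (Matrix.orthogonalGroup (Fin d) ℝ) := borel _

instance (d : ℕ) : BorelSpace (Matrix.orthogonalGroup (Fin d) ℝ) := ⟨rfl⟩

lemma sum_two {d : ℕ} {p q : Fin d} (hpq : p ≠ q) (α β γ δ : ℝ) :
    ∑ k, (if k = p then α else if k = q then β else 0) *
         (if k = p then γ else if k = q then δ else 0) = α*γ + β*δ := by
  have h : ∀ k : Fin d, (if k = p then α else if k = q then β else 0) *
         (if k = p then γ else if k = q then δ else 0)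
       = (if k = p then α*γ else 0) + (if k = q then β*δ else 0) := by
    intro k
    rcases eq_or_ne k p with rfl | hkp
    · simp [hpq]
    · rcases eq_or_ne k q with rfl | hkq
      · simp [hkp]
      · simp [hkp, hkq]
  rw [Finset.sum_congr rfl fun k _ => h k, Finset.sum_add_distrib]
  simp

lemma sum_two_vec {d : ℕ} {p q : Fin d} (hpq : p ≠ q) (α β : ℝ) (x : Fin d → ℝ) :
    ∑ k, (if k = p then α else if k = q then β else 0) * x k = α * x p + β * x q := by
  have h : ∀ k : Fin d, (if k = p then α else if k = q then β else 0) * x k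
       = (if k = p then α * x p else 0) + (if k = q then β * x q else 0) := by
    intro k
    rcases eq_or_ne k p with rfl | hkp
    · simp [hpq]
    · rcases eq_or_ne k q with rfl | hkq
      · simp [hkp]
      · simp [hkp, hkq]
  rw [Finset.sum_congr rfl fun k _ => h k, Finset.sum_add_distrib]
  simp

lemma sum_delta_r {d : ℕ} (f : Fin d → ℝ) (j : Fin d) :
    ∑ k, f k * (if k = j then 1 else 0) = f j := by
  simp [mul_ite]

lemma sum_delta_l {d : ℕ} (f : Fin d → ℝ) (j : Fin d) :
    ∑ k, (if k = j then 1 else 0) * f k = f j := by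
  simp [ite_mul]

def rc : ℝ := Real.sqrt 2 / 2

lemma rc_sq : rc * rc = 1/2 := by
  have : Real.sqrt 2 * Real.sqrt 2 = 2 := Real.mul_self_sqrt (by norm_num)
  rw [rc]; nlinarith

def rotM {d : ℕ} (p q : Fin d) : Matrix (Fin d) (Fin d) ℝ :=
  Matrix.of fun k i =>
    if i = p then (if k = p then rc else if k = q then -rc else 0)
    else if i = q then (if k = p then rc else if k = q then rc else 0)
    else if k = i then 1 else 0

lemma rotM_col_p {d : ℕ} (p q k : Fin d) :
    rotM p q k p = if k = p then rc else if k = q then -rc else 0 := by simp [rotM]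

lemma rotM_col_q {d : ℕ} {p q : Fin d} (hpq : p ≠ q) (k : Fin d) :
    rotM p q k q = if k = p then rc else if k = q then rc else 0 := by
  simp [rotM, hpq.symm]

lemma rotM_col_other {d : ℕ} {p q i : Fin d} (hip : i ≠ p) (hiq : i ≠ q) (k : Fin d) :
    rotM p q k i = if k = i then 1 else 0 := by
  simp [rotM, hip, hiq]

lemma rotM_mem {d : ℕ} {p q : Fin d} (hpq : p ≠ q) :
    rotM p q ∈ Matrix.orthogonalGroup (Fin d) ℝ := by
  rw [Matrix.mem_unitaryGroup_iff']
  ext i j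
  have key : ∀ k, (star (rotM p q)) i k * (rotM p q) k j = (rotM p q) k i * (rotM p q) k j := by
    intro k; simp [Matrix.star_eq_conjTranspose, Matrix.conjTranspose_apply]
  rw [Matrix.mul_apply, Finset.sum_congr rfl fun k _ => key k]
  by_cases hip : i = p
  · by_cases hjp : j = p
    · rw [hip, hjp, Matrix.one_apply_eq,
        Finset.sum_congr rfl fun k _ => by rw [rotM_col_p], sum_two hpq]
      nlinarith [rc_sq]
    · by_cases hjq : j = q
      · rw [hip, hjq, Matrix.one_apply_ne hpq,
          Finset.sum_congr rfl fun k _ => by rw [rotM_col_p, rotM_col_q hpq], sum_two hpq]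
        ring
      · rw [hip, Matrix.one_apply_ne (fun h => hjp h.symm),
          Finset.sum_congr rfl fun k _ =>
            by rw [rotM_col_p, rotM_col_other hjp hjq], sum_delta_r]
        simp [hjp, hjq]
  · by_cases hiq : i = q
    · by_cases hjp : j = p
      · rw [hiq, hjp, Matrix.one_apply_ne (Ne.symm hpq),
          Finset.sum_congr rfl fun k _ => by rw [rotM_col_q hpq, rotM_col_p], sum_two hpq]
        ring
      · by_cases hjq : j = q
        · rw [hiq, hjq, Matrix.one_apply_eq,
            Finset.sum_congr rfl fun k _ => by rw [rotM_col_q hpq], sum_two hpq]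
          nlinarith [rc_sq]
        · rw [hiq, Matrix.one_apply_ne (fun h => hjq h.symm),
            Finset.sum_congr rfl fun k _ =>
              by rw [rotM_col_q hpq, rotM_col_other hjp hjq], sum_delta_r]
          simp [hjp, hjq]
    · by_cases hjp : j = p
      · rw [hjp, Matrix.one_apply_ne hip,
          Finset.sum_congr rfl fun k _ =>
            by rw [rotM_col_other hip hiq, rotM_col_p], sum_delta_l]
        simp [hip, hiq]
      · by_cases hjq : j = q
        · rw [hjq, Matrix.one_apply_ne hiq,
            Finset.sum_congr rfl fun k _ =>
              by rw [rotM_col_other hip hiq, rotM_col_q hpq], sum_delta_l]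
          simp [hip, hiq]
        · rw [Finset.sum_congr rfl fun k _ =>
              by rw [rotM_col_other hip hiq, rotM_col_other hjp hjq], sum_delta_l]
          simp [Matrix.one_apply, eq_comm]

lemma rotM_mulVec_p {d : ℕ} {p q : Fin d} (hpq : p ≠ q) (x : Fin d → ℝ) :
    (rotM p q).mulVec x p = rc * x p + rc * x q := by
  simp only [Matrix.mulVec, dotProduct]
  have h : ∀ i : Fin d, (rotM p q) p i * x i
      = (if i = p then rc else if i = q then rc else 0) * x i := by
    intro i
    by_cases h1 : i = p
    · rw [h1, rotM_col_p]; simp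
    · by_cases h2 : i = q
      · rw [h2, rotM_col_q hpq]; simp [Ne.symm hpq]
      · rw [rotM_col_other h1 h2]; simp [h1, h2, Ne.symm h1]
  rw [Finset.sum_congr rfl fun i _ => h i, sum_two_vec hpq]
-- flip matrix
def flipM {d : ℕ} (m : Fin d) : Matrix (Fin d) (Fin d) ℝ :=
  Matrix.diagonal (fun t => if t = m then -1 else 1)

lemma flipM_mem {d : ℕ} (m : Fin d) : flipM m ∈ Matrix.orthogonalGroup (Fin d) ℝ := by
  rw [Matrix.mem_unitaryGroup_iff]
  ext i j
  simp [flipM, Matrix.star_eq_conjTranspose, Matrix.diagonal_conjTranspose,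
    Matrix.diagonal_mul_diagonal, Matrix.diagonal_apply, Matrix.one_apply]
  rcases eq_or_ne i j with rfl | hij
  · rcases eq_or_ne i m with rfl | him
    · simp
    · simp [him]
  · simp [hij]

lemma flipM_mulVec {d : ℕ} (m : Fin d) (x : Fin d → ℝ) (t : Fin d) :
    (flipM m).mulVec x t = (if t = m then -1 else 1) * x t := by
  simp [flipM, Matrix.mulVec_diagonal]

-- permutation matrix (columns: col i = e_{σ i})
def permM {d : ℕ} (σ : Equiv.Perm (Fin d)) : Matrix (Fin d) (Fin d) ℝ :=
  Matrix.of fun k i => if k = σ i then 1 else 0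

lemma permM_mem {d : ℕ} (σ : Equiv.Perm (Fin d)) : permM σ ∈ Matrix.orthogonalGroup (Fin d) ℝ := by
  rw [Matrix.mem_unitaryGroup_iff']
  ext i j
  have : ∀ k, (star (permM σ)) i k * (permM σ) k j
      = (if k = σ i then 1 else 0) * (if k = σ j then (1:ℝ) else 0) := by
    intro k
    simp [permM, Matrix.star_eq_conjTranspose, Matrix.conjTranspose_apply]
  rw [Matrix.mul_apply, Finset.sum_congr rfl fun k _ => this k]
  rcases eq_or_ne i j with rfl | hij
  · simp [Matrix.one_apply]
  · have h2 : σ i ≠ σ j := fun h => hij (σ.injective h)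
    rw [Matrix.one_apply_ne hij]
    rw [Finset.sum_eq_zero]
    intro k _
    rcases eq_or_ne k (σ i) with rfl | hk
    · simp [h2]
    · simp [hk]

lemma permM_mulVec {d : ℕ} (σ : Equiv.Perm (Fin d)) (x : Fin d → ℝ) (t : Fin d) :
    (permM σ).mulVec x t = x (σ.symm t) := by
  simp only [Matrix.mulVec, dotProduct, permM, Matrix.of_apply]
  rw [Finset.sum_eq_single (σ.symm t)]
  · simp
  · intro b _ hb
    have : t ≠ σ b := by
      intro h; exact hb (by simp [h])
    simp [this]
  · simp

-- the vector w(O) = O v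
def wv {d : ℕ} (v : Fin d → ℝ) (O : Matrix.orthogonalGroup (Fin d) ℝ) : Fin d → ℝ :=
  (O : Matrix (Fin d) (Fin d) ℝ).mulVec v

lemma wv_cont {d : ℕ} (v : Fin d → ℝ) (i : Fin d) : Continuous fun O => wv v O i := by
  have : (fun O : Matrix.orthogonalGroup (Fin d) ℝ => wv v O i)
      = fun O : Matrix.orthogonalGroup (Fin d) ℝ =>
          ∑ j, (O : Matrix (Fin d) (Fin d) ℝ) i j * v j := rfl
  rw [this]
  exact continuous_finset_sum _ fun j _ =>
    ((continuous_subtype_val.matrix_elem i j).mul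
      continuous_const)

lemma wv_norm {d : ℕ} {v : Fin d → ℝ} (hv : ∑ i, v i ^ 2 = 1)
    (O : Matrix.orthogonalGroup (Fin d) ℝ) : ∑ t, wv v O t ^ 2 = 1 := by
  have hO : star (O : Matrix (Fin d) (Fin d) ℝ) * (O : Matrix (Fin d) (Fin d) ℝ) = 1 :=
    Matrix.UnitaryGroup.star_mul_self O
  have key : wv v O ⬝ᵥ wv v O = v ⬝ᵥ v := by
    conv_lhs => rw [show wv v O ⬝ᵥ wv v O = star (wv v O) ⬝ᵥ wv v O from by
      simp [dotProduct]]
    rw [wv, Matrix.star_mulVec, Matrix.dotProduct_mulVec, Matrix.vecMul_vecMul,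
      ← Matrix.star_eq_conjTranspose, hO, Matrix.vecMul_one]
    simp [dotProduct]
  have e1 : ∑ t, wv v O t ^ 2 = wv v O ⬝ᵥ wv v O := by
    simp [dotProduct, sq]
  have e2 : v ⬝ᵥ v = 1 := by rw [← hv]; simp [dotProduct, sq]
  rw [e1, key, e2]

lemma wv_abs_le {d : ℕ} {v : Fin d → ℝ} (hv : ∑ i, v i ^ 2 = 1)
    (O : Matrix.orthogonalGroup (Fin d) ℝ) (i : Fin d) : |wv v O i| ≤ 1 := by
  have h1 : wv v O i ^ 2 ≤ 1 := by
    rw [← wv_norm hv O]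
    exact Finset.single_le_sum (f := fun t => wv v O t ^ 2) (fun t _ => sq_nonneg _)
      (Finset.mem_univ i)
  nlinarith [abs_nonneg (wv v O i), sq_abs (wv v O i)]

lemma wv_integrable {d : ℕ} {v : Fin d → ℝ} (hv : ∑ i, v i ^ 2 = 1)
    (μ : Measure (Matrix.orthogonalGroup (Fin d) ℝ)) [IsProbabilityMeasure μ]
    (i j k l : Fin d) :
    Integrable (fun O => wv v O i * wv v O j * wv v O k * wv v O l) μ := by
  apply Integrable.mono' (integrable_const (1 : ℝ))
  · exact ((((wv_cont v i).mul (wv_cont v j)).mul (wv_cont v k)).mul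
      (wv_cont v l)).aestronglyMeasurable
  · refine Filter.Eventually.of_forall fun O => ?_
    have := wv_abs_le hv O
    rw [Real.norm_eq_abs, abs_mul, abs_mul, abs_mul]
    have h1 : |wv v O i| * |wv v O j| ≤ 1 :=
      mul_le_one₀ (this i) (abs_nonneg _) (this j)
    have h2 : |wv v O i| * |wv v O j| * |wv v O k| ≤ 1 :=
      mul_le_one₀ h1 (abs_nonneg _) (this k)
    exact mul_le_one₀ h2 (abs_nonneg _) (this l)

lemma inv_int {d : ℕ} (v : Fin d → ℝ)
    (μ : Measure (Matrix.orthogonalGroup (Fin d) ℝ)) [μ.IsHaarMeasure]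
    {Q : Matrix (Fin d) (Fin d) ℝ} (hQ : Q ∈ Matrix.orthogonalGroup (Fin d) ℝ)
    (f : (Fin d → ℝ) → ℝ) :
    ∫ O, f (Q.mulVec (wv v O)) ∂μ = ∫ O, f (wv v O) ∂μ := by
  have := MeasureTheory.integral_mul_left_eq_self (μ := μ)
    (fun O => f (wv v O)) (⟨Q, hQ⟩ : Matrix.orthogonalGroup (Fin d) ℝ)
  rw [← this]
  congr 1
  funext O
  congr 1
  show Q.mulVec ((O : Matrix (Fin d) (Fin d) ℝ).mulVec v) = _
  rw [Matrix.mulVec_mulVec]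
  rfl

lemma moment_flip {d : ℕ} (v : Fin d → ℝ) (μ : Measure (Matrix.orthogonalGroup (Fin d) ℝ))
    [μ.IsHaarMeasure] (m i j k l : Fin d)
    (hs : ((if i = m then (-1:ℝ) else 1) * (if j = m then -1 else 1) *
      (if k = m then -1 else 1) * (if l = m then -1 else 1)) = -1) :
    ∫ O, wv v O i * wv v O j * wv v O k * wv v O l ∂μ = 0 := by
  have h := inv_int v μ (flipM_mem m) (fun x => x i * x j * x k * x l)
  have h2 : ∀ O : Matrix.orthogonalGroup (Fin d) ℝ,
      (fun x : Fin d → ℝ => x i * x j * x k * x l) ((flipM m).mulVec (wv v O))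
      = -(wv v O i * wv v O j * wv v O k * wv v O l) := by
    intro O
    simp only [flipM_mulVec]
    linear_combination (wv v O i * wv v O j * wv v O k * wv v O l) * hs
  have h3 := (integral_congr_ae (μ := μ) (Filter.Eventually.of_forall h2)).symm.trans h
  rw [integral_neg] at h3
  linarith

lemma moment_perm {d : ℕ} (v : Fin d → ℝ) (μ : Measure (Matrix.orthogonalGroup (Fin d) ℝ))
    [μ.IsHaarMeasure] (σ : Equiv.Perm (Fin d)) (i j k l : Fin d) :
    ∫ O, wv v O (σ i) * wv v O (σ j) * wv v O (σ k) * wv v O (σ l) ∂μ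
      = ∫ O, wv v O i * wv v O j * wv v O k * wv v O l ∂μ := by
  have h := inv_int v μ (permM_mem σ⁻¹) (fun x => x i * x j * x k * x l)
  have h2 : ∀ O : Matrix.orthogonalGroup (Fin d) ℝ,
      (fun x : Fin d → ℝ => x i * x j * x k * x l) ((permM σ⁻¹).mulVec (wv v O))
      = wv v O (σ i) * wv v O (σ j) * wv v O (σ k) * wv v O (σ l) := by
    intro O
    simp only [permM_mulVec]
    simp [Equiv.Perm.inv_def]
  exact (integral_congr_ae (μ := μ) (Filter.Eventually.of_forall h2)).symm.trans h

lemma moment_rot {d : ℕ} {v : Fin d → ℝ} (hv : ∑ i, v i ^ 2 = 1)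
    (μ : Measure (Matrix.orthogonalGroup (Fin d) ℝ))
    [μ.IsHaarMeasure] [IsProbabilityMeasure μ] {p q : Fin d} (hpq : p ≠ q) :
    ∫ O, wv v O p * wv v O p * wv v O p * wv v O p ∂μ
      = 3 * ∫ O, wv v O p * wv v O p * wv v O q * wv v O q ∂μ := by
  have h := inv_int v μ (rotM_mem hpq) (fun x => x p * x p * x p * x p)
  have h2 : ∀ O : Matrix.orthogonalGroup (Fin d) ℝ,
      (fun x : Fin d → ℝ => x p * x p * x p * x p) ((rotM p q).mulVec (wv v O))
      = (1/4) * (wv v O p * wv v O p * wv v O p * wv v O p)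
        + ((wv v O p * wv v O p * wv v O p * wv v O q)
        + ((3/2) * (wv v O p * wv v O p * wv v O q * wv v O q)
        + ((wv v O p * wv v O q * wv v O q * wv v O q)
        + (1/4) * (wv v O q * wv v O q * wv v O q * wv v O q)))) := by
    intro O
    simp only [rotM_mulVec_p hpq]
    have h4 : rc*rc*rc*rc = 1/4 := by nlinarith [rc_sq]
    linear_combination (wv v O p + wv v O q)^4 * h4
  have h3 := (integral_congr_ae (μ := μ) (Filter.Eventually.of_forall h2)).symm.trans h
  have I1 := wv_integrable hv μ p p p p
  have I2 := wv_integrable hv μ p p p q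
  have I3 := wv_integrable hv μ p p q q
  have I4 := wv_integrable hv μ p q q q
  have I5 := wv_integrable hv μ q q q q
  have J5 : Integrable (fun O => (1/4 : ℝ) * (wv v O q * wv v O q * wv v O q * wv v O q)) μ :=
    I5.const_mul _
  have J45 : Integrable (fun O => wv v O p * wv v O q * wv v O q * wv v O q
      + (1/4 : ℝ) * (wv v O q * wv v O q * wv v O q * wv v O q)) μ := I4.add J5
  have J3 : Integrable (fun O => (3/2 : ℝ) * (wv v O p * wv v O p * wv v O q * wv v O q)) μ :=
    I3.const_mul _
  have J345 : Integrable (fun O => (3/2 : ℝ) * (wv v O p * wv v O p * wv v O q * wv v O q)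
      + (wv v O p * wv v O q * wv v O q * wv v O q
      + (1/4 : ℝ) * (wv v O q * wv v O q * wv v O q * wv v O q))) μ := J3.add J45
  have J2345 : Integrable (fun O => wv v O p * wv v O p * wv v O p * wv v O q
      + ((3/2 : ℝ) * (wv v O p * wv v O p * wv v O q * wv v O q)
      + (wv v O p * wv v O q * wv v O q * wv v O q
      + (1/4 : ℝ) * (wv v O q * wv v O q * wv v O q * wv v O q)))) μ := I2.add J345
  rw [integral_add (I1.const_mul _) J2345,
    integral_add I2 J345,
    integral_add J3 J45,
    integral_add I4 J5,
    integral_const_mul, integral_const_mul, integral_const_mul] at h3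
  have e2 : ∫ O, wv v O p * wv v O p * wv v O p * wv v O q ∂μ = 0 :=
    moment_flip v μ q p p p q (by simp [hpq])
  have e4 : ∫ O, wv v O p * wv v O q * wv v O q * wv v O q ∂μ = 0 :=
    moment_flip v μ p p q q q (by simp [hpq, hpq.symm])
  have e5 : ∫ O, wv v O q * wv v O q * wv v O q * wv v O q ∂μ
      = ∫ O, wv v O p * wv v O p * wv v O p * wv v O p ∂μ := by
    have := moment_perm v μ (Equiv.swap p q) p p p p
    simpa [Equiv.swap_apply_left] using this
  rw [e2, e4, e5] at h3
  linarith

lemma moment_master {d : ℕ} (hd : 2 ≤ d) {v : Fin d → ℝ} (hv : ∑ i, v i ^ 2 = 1)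
    (μ : Measure (Matrix.orthogonalGroup (Fin d) ℝ))
    [μ.IsHaarMeasure] [IsProbabilityMeasure μ] :
    ∃ b : ℝ, (d : ℝ) * ((d : ℝ) + 2) * b = 1 ∧
      ∀ i j k l : Fin d, ∫ O, wv v O i * wv v O j * wv v O k * wv v O l ∂μ
        = b * ((if i = j then (1:ℝ) else 0) * (if k = l then 1 else 0)
             + (if i = k then 1 else 0) * (if j = l then 1 else 0)
             + (if i = l then 1 else 0) * (if j = k then 1 else 0)) := by
  have hd0 : 0 < d := by omega
  set p : Fin d := ⟨0, by omega⟩ with hp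
  set q : Fin d := ⟨1, by omega⟩ with hq
  have hpq : p ≠ q := by simp [hp, hq, Fin.ext_iff]
  set b : ℝ := ∫ O, wv v O p * wv v O p * wv v O q * wv v O q ∂μ with hbdef
  set a : ℝ := ∫ O, wv v O p * wv v O p * wv v O p * wv v O p ∂μ with hadef
  have hab : a = 3 * b := moment_rot hv μ hpq
  -- all diagonal fourth moments equal a
  have hdiag : ∀ i : Fin d, ∫ O, wv v O i * wv v O i * wv v O i * wv v O i ∂μ = a := by
    intro i
    have := moment_perm v μ (Equiv.swap p i) p p p p
    simpa [Equiv.swap_apply_left] using this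
  -- all off-diagonal (i≠j) moments ∫ wi²wj² equal b
  have hoff : ∀ i j : Fin d, i ≠ j → ∫ O, wv v O i * wv v O i * wv v O j * wv v O j ∂μ = b := by
    intro i j hij
    set τ : Equiv.Perm (Fin d) := Equiv.swap p i with hτ
    have hτj : τ.symm j ≠ p := by
      intro h
      have : j = τ p := by rw [← h, Equiv.apply_symm_apply]
      rw [hτ, Equiv.swap_apply_left] at this
      exact hij this.symm
    set ρ : Equiv.Perm (Fin d) := Equiv.swap q (τ.symm j) with hρ
    have hρp : ρ p = p := Equiv.swap_apply_of_ne_of_ne hpq (fun h => hτj h.symm)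
    have hσp : (τ * ρ) p = i := by
      rw [Equiv.Perm.mul_apply, hρp, hτ, Equiv.swap_apply_left]
    have hσq : (τ * ρ) q = j := by
      rw [Equiv.Perm.mul_apply, hρ, Equiv.swap_apply_left, Equiv.apply_symm_apply]
    have := moment_perm v μ (τ * ρ) p p q q
    rw [hσp, hσq] at this
    exact this
  -- normalization
  have hnorm : (d : ℝ) * a + (d : ℝ) * ((d : ℝ) - 1) * b = 1 := by
    have hpt : ∀ O : Matrix.orthogonalGroup (Fin d) ℝ,
        ∑ i, ∑ j, wv v O i * wv v O i * wv v O j * wv v O j = 1 := by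
      intro O
      have h1 := wv_norm hv O
      have : ∑ i, ∑ j, wv v O i * wv v O i * wv v O j * wv v O j
          = (∑ i, wv v O i ^ 2) * (∑ j, wv v O j ^ 2) := by
        rw [Finset.sum_mul_sum]
        apply Finset.sum_congr rfl; intro i _
        apply Finset.sum_congr rfl; intro j _
        ring
      rw [this, h1, one_mul]
    have hint : ∫ O, ∑ i, ∑ j, wv v O i * wv v O i * wv v O j * wv v O j ∂μ = 1 := by
      rw [show (fun O : Matrix.orthogonalGroup (Fin d) ℝ =>
        ∑ i, ∑ j, wv v O i * wv v O i * wv v O j * wv v O j) = fun _ => (1:ℝ) from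
        funext hpt]
      simp
    rw [integral_finset_sum _ (fun i _ => integrable_finset_sum _
      (fun j _ => wv_integrable hv μ i i j j))] at hint
    have : ∀ i ∈ Finset.univ, ∫ O, ∑ j, wv v O i * wv v O i * wv v O j * wv v O j ∂μ
        = a + ((d : ℝ) - 1) * b := by
      intro i _
      rw [integral_finset_sum _ (fun j _ => wv_integrable hv μ i i j j)]
      have : ∀ j ∈ Finset.univ, ∫ O, wv v O i * wv v O i * wv v O j * wv v O j ∂μ
          = (if j = i then a - b else 0) + b := by
        intro j _
        rcases eq_or_ne j i with rfl | hji
        · rw [hdiag j, if_pos rfl]; ring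
        · rw [hoff i j (Ne.symm hji), if_neg hji]; ring
      rw [Finset.sum_congr rfl this, Finset.sum_add_distrib, Finset.sum_ite_eq'
        Finset.univ i, Finset.sum_const, Finset.card_univ, Fintype.card_fin]
      simp only [Finset.mem_univ, if_pos, nsmul_eq_mul]
      push_cast
      ring
    rw [Finset.sum_congr rfl this, Finset.sum_const, Finset.card_univ, Fintype.card_fin,
      nsmul_eq_mul] at hint
    linear_combination hint
  refine ⟨b, by rw [← hnorm, hab]; ring, ?_⟩
  intro i j k l
  by_cases hij : i = j
  · subst hij
    by_cases hkl : k = l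
    · subst hkl
      by_cases hik : i = k
      · subst hik
        rw [hdiag i, hab]
        simp
        ring
      · rw [hoff i k hik]
        simp [hik]
    · -- i=j, k≠l : flip at l kills it
      rw [moment_flip v μ l i i k l (by
        rcases eq_or_ne i l with rfl | hil
        · simp [hkl]
        · simp [hil, hkl])]
      have h2 : ¬(i = k ∧ i = l) := fun ⟨h1, h2⟩ => hkl (h1.symm.trans h2)
      rcases eq_or_ne i k with rfl | hik
      · have hil : i ≠ l := fun h => hkl h
        simp [hkl, hil]
      · simp [hkl, hik]
  · by_cases hik : i = k
    · subst hik
      by_cases hjl : j = l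
      · subst hjl
        rw [show (fun O : Matrix.orthogonalGroup (Fin d) ℝ =>
            wv v O i * wv v O j * wv v O i * wv v O j)
            = fun O => wv v O i * wv v O i * wv v O j * wv v O j from
          funext fun O => by ring]
        rw [hoff i j hij]
        simp [hij]
      · rw [moment_flip v μ j i j i l (by simp [hij, Ne.symm hij, Ne.symm hjl])]
        simp [hij, hjl, Ne.symm hij]
    · by_cases hil : i = l
      · subst hil
        by_cases hjk : j = k
        · subst hjk
          rw [show (fun O : Matrix.orthogonalGroup (Fin d) ℝ =>
              wv v O i * wv v O j * wv v O j * wv v O i)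
              = fun O => wv v O i * wv v O i * wv v O j * wv v O j from
            funext fun O => by ring]
          rw [hoff i j hij]
          simp [hij]
        · rw [moment_flip v μ j i j k i (by simp [hij, Ne.symm hij, Ne.symm hjk])]
          simp [hij, hik, hjk]
      · rw [moment_flip v μ i i j k l (by simp [Ne.symm hij, Ne.symm hik, Ne.symm hil])]
        simp [hij, hik, hil]
lemma imag_vecMulVec {d : ℕ} (u : Fin d → ℂ) :
    Imag (Matrix.vecMulVec u (star u))
      = (1/2) * ((∑ i, Complex.normSq (u i))^2 - Complex.normSq (∑ i, u i * u i)) := by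
  classical
  set A := Matrix.vecMulVec u (star u) with hA
  have hB : ∀ j i : Fin d, (A - Aᵀ) j i
      = u j * (starRingEnd ℂ) (u i) - u i * (starRingEnd ℂ) (u j) := by
    intro j i
    simp [hA, Matrix.sub_apply, Matrix.transpose_apply, Matrix.vecMulVec_apply,
      Pi.star_apply, Complex.star_def]
    ring
  have htr : ((A - Aᵀ)ᴴ * (A - Aᵀ)).trace
      = ∑ i, ∑ j, (starRingEnd ℂ) ((A - Aᵀ) j i) * ((A - Aᵀ) j i) := by
    rw [Matrix.trace]
    apply Finset.sum_congr rfl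
    intro i _
    rw [Matrix.diag_apply, Matrix.mul_apply]
    apply Finset.sum_congr rfl
    intro j _
    rw [Matrix.conjTranspose_apply, Complex.star_def]
  have hterm : ∀ i j : Fin d, (starRingEnd ℂ) ((A - Aᵀ) j i) * ((A - Aᵀ) j i)
      = (u i * (starRingEnd ℂ) (u i)) * (u j * (starRingEnd ℂ) (u j))
        + (u j * (starRingEnd ℂ) (u j)) * (u i * (starRingEnd ℂ) (u i))
        - (u i * u i) * ((starRingEnd ℂ) (u j) * (starRingEnd ℂ) (u j))
        - (u j * u j) * ((starRingEnd ℂ) (u i) * (starRingEnd ℂ) (u i)) := by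
    intro i j
    rw [hB, map_sub, _root_.map_mul, _root_.map_mul, Complex.conj_conj, Complex.conj_conj]
    ring
  have hsum : ((A - Aᵀ)ᴴ * (A - Aᵀ)).trace
      = (∑ i, u i * (starRingEnd ℂ) (u i)) * (∑ j, u j * (starRingEnd ℂ) (u j))
        + (∑ i, u i * (starRingEnd ℂ) (u i)) * (∑ j, u j * (starRingEnd ℂ) (u j))
        - (∑ i, u i * u i) * (∑ j, (starRingEnd ℂ) (u j) * (starRingEnd ℂ) (u j))
        - (∑ i, (starRingEnd ℂ) (u i) * (starRingEnd ℂ) (u i)) * (∑ j, u j * u j) := by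
    rw [htr, Finset.sum_congr rfl fun i _ => Finset.sum_congr rfl fun j _ => hterm i j]
    simp only [Finset.sum_add_distrib, Finset.sum_sub_distrib, ← Finset.mul_sum,
      ← Finset.sum_mul]
    ring
  -- now take real parts
  have hS1 : (∑ i, u i * (starRingEnd ℂ) (u i)) = ((∑ i, Complex.normSq (u i) : ℝ) : ℂ) := by
    rw [Complex.ofReal_sum]
    exact Finset.sum_congr rfl fun i _ => (Complex.mul_conj (u i))
  have hS2 : (∑ i, (starRingEnd ℂ) (u i) * (starRingEnd ℂ) (u i))
      = (starRingEnd ℂ) (∑ i, u i * u i) := by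
    rw [map_sum]
    exact Finset.sum_congr rfl fun i _ => by rw [_root_.map_mul]
  rw [Imag, hsum, hS1, hS2]
  rw [show (∑ i, u i * u i) * (starRingEnd ℂ) (∑ i, u i * u i)
      = ((Complex.normSq (∑ i, u i * u i) : ℝ) : ℂ) from Complex.mul_conj _]
  rw [show (starRingEnd ℂ) (∑ i, u i * u i) * (∑ j, u j * u j)
      = ((Complex.normSq (∑ i, u i * u i) : ℝ) : ℂ) from by
    rw [mul_comm]; exact Complex.mul_conj _]
  push_cast [Complex.sub_re, Complex.add_re]
  simp
  ring

lemma state_eq {d : ℕ} (U : Matrix (Fin d) (Fin d) ℂ) (w : Fin d → ℝ) :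
    U * ((Matrix.vecMulVec w w).map Complex.ofReal) * Uᴴ
      = Matrix.vecMulVec (U.mulVec fun i => (w i : ℂ)) (star (U.mulVec fun i => (w i : ℂ))) := by
  ext a b
  simp only [Matrix.mul_apply, Matrix.map_apply, Matrix.vecMulVec_apply,
    Matrix.conjTranspose_apply, Matrix.mulVec, dotProduct, Pi.star_apply,
    Complex.star_def, map_sum, _root_.map_mul, Complex.conj_ofReal, Complex.ofReal_mul]
  rw [Finset.sum_mul_sum]
  simp only [Finset.sum_mul]
  rw [Finset.sum_comm]
  exact Finset.sum_congr rfl fun x _ => Finset.sum_congr rfl fun y _ => by ring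

lemma norm_u {d : ℕ} {U : Matrix (Fin d) (Fin d) ℂ} (hU : U ∈ Matrix.unitaryGroup (Fin d) ℂ)
    {w : Fin d → ℝ} (hw : ∑ i, w i ^ 2 = 1) :
    ∑ i, Complex.normSq (U.mulVec (fun i => (w i : ℂ)) i) = 1 := by
  set u : Fin d → ℂ := U.mulVec (fun i => (w i : ℂ)) with hu
  have key : ((∑ i, Complex.normSq (u i) : ℝ) : ℂ) = ((1 : ℝ) : ℂ) := by
    rw [Complex.ofReal_sum]
    have h1 : ∀ i ∈ Finset.univ, ((Complex.normSq (u i) : ℝ) : ℂ)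
        = (starRingEnd ℂ) (u i) * u i := fun i _ => by
      rw [mul_comm]; exact (Complex.mul_conj (u i)).symm
    rw [Finset.sum_congr rfl h1]
    have h2 : ∑ i, (starRingEnd ℂ) (u i) * u i = dotProduct (star u) u := rfl
    rw [h2, hu, Matrix.star_mulVec, Matrix.dotProduct_mulVec, Matrix.vecMul_vecMul,
      ← Matrix.star_eq_conjTranspose, Matrix.mem_unitaryGroup_iff'.mp hU,
      Matrix.vecMul_one]
    have : dotProduct (star fun i => ((w i : ℝ) : ℂ)) (fun i => ((w i : ℝ) : ℂ))
        = ((∑ i, w i ^ 2 : ℝ) : ℂ) := by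
      rw [dotProduct, Complex.ofReal_sum]
      apply Finset.sum_congr rfl
      intro i _
      simp [Complex.conj_ofReal, sq]
    rw [this, hw]
  exact_mod_cast key

lemma S2_eq {d : ℕ} (U : Matrix (Fin d) (Fin d) ℂ) (w : Fin d → ℝ) :
    ∑ i, (U.mulVec (fun i => (w i : ℂ)) i) * (U.mulVec (fun i => (w i : ℂ)) i)
      = ∑ i, ∑ j, (Uᵀ * U) i j * ((w i : ℂ) * (w j : ℂ)) := by
  simp only [Matrix.mulVec, dotProduct, Matrix.mul_apply, Matrix.transpose_apply,
    Finset.sum_mul, Finset.mul_sum]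
  rw [Finset.sum_comm]
  apply Finset.sum_congr rfl
  intro a _
  rw [Finset.sum_comm]
  apply Finset.sum_congr rfl
  intro b _
  apply Finset.sum_congr rfl
  intro i _
  ring

lemma imag_state {d : ℕ} {U : Matrix (Fin d) (Fin d) ℂ}
    (hU : U ∈ Matrix.unitaryGroup (Fin d) ℂ) {w : Fin d → ℝ} (hw : ∑ i, w i ^ 2 = 1) :
    Imag (U * ((Matrix.vecMulVec w w).map Complex.ofReal) * Uᴴ)
      = 1/2 - (1/2) * Complex.normSq (∑ i, ∑ j, (Uᵀ * U) i j * ((w i : ℂ) * (w j : ℂ))) := by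
  rw [state_eq, imag_vecMulVec, norm_u hU hw, ← S2_eq]
  ring
lemma collapse_l {d : ℕ} (f : Fin d → ℝ) (j : Fin d) :
    ∑ l, (if j = l then (1:ℝ) else 0) * f l = f j := by
  simp only [ite_mul, one_mul, zero_mul, Finset.sum_ite_eq, Finset.mem_univ, if_true]

lemma delta_sum {d : ℕ} (M : Matrix (Fin d) (Fin d) ℂ) (b : ℝ) :
    (∑ i, ∑ j, ∑ k, ∑ l, (M i j * (starRingEnd ℂ) (M k l)).re *
        (b * ((if i = j then (1:ℝ) else 0) * (if k = l then 1 else 0)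
             + (if i = k then 1 else 0) * (if j = l then 1 else 0)
             + (if i = l then 1 else 0) * (if j = k then 1 else 0))))
    = b * ((∑ i, ∑ k, (M i i * (starRingEnd ℂ) (M k k)).re)
          + (∑ i, ∑ j, (M i j * (starRingEnd ℂ) (M i j)).re)
          + (∑ i, ∑ j, (M i j * (starRingEnd ℂ) (M j i)).re)) := by
  have hterm : ∀ i j k l : Fin d, (M i j * (starRingEnd ℂ) (M k l)).re *
        (b * ((if i = j then (1:ℝ) else 0) * (if k = l then 1 else 0)
             + (if i = k then 1 else 0) * (if j = l then 1 else 0)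
             + (if i = l then 1 else 0) * (if j = k then 1 else 0)))
      = b * ((if i = j then (1:ℝ) else 0) * ((if k = l then 1 else 0)
              * (M i j * (starRingEnd ℂ) (M k l)).re))
      + (b * ((if i = k then (1:ℝ) else 0) * ((if j = l then 1 else 0)
              * (M i j * (starRingEnd ℂ) (M k l)).re))
      + b * ((if j = k then (1:ℝ) else 0) * ((if i = l then 1 else 0)
              * (M i j * (starRingEnd ℂ) (M k l)).re))) := by
    intro i j k l; ring
  rw [Finset.sum_congr rfl fun i _ => Finset.sum_congr rfl fun j _ =>
    Finset.sum_congr rfl fun k _ => Finset.sum_congr rfl fun l _ => hterm i j k l]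
  simp only [Finset.sum_add_distrib, ← Finset.mul_sum]
  -- Term 1
  have h1 : ∀ i j k : Fin d, ∑ l, (if k = l then (1:ℝ) else 0)
        * (M i j * (starRingEnd ℂ) (M k l)).re
      = (M i j * (starRingEnd ℂ) (M k k)).re := fun i j k =>
    collapse_l (fun l => (M i j * (starRingEnd ℂ) (M k l)).re) k
  have h2 : ∀ i j k : Fin d, ∑ l, (if j = l then (1:ℝ) else 0)
        * (M i j * (starRingEnd ℂ) (M k l)).re
      = (M i j * (starRingEnd ℂ) (M k j)).re := fun i j k =>
    collapse_l (fun l => (M i j * (starRingEnd ℂ) (M k l)).re) j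
  have h3 : ∀ i j k : Fin d, ∑ l, (if i = l then (1:ℝ) else 0)
        * (M i j * (starRingEnd ℂ) (M k l)).re
      = (M i j * (starRingEnd ℂ) (M k i)).re := fun i j k =>
    collapse_l (fun l => (M i j * (starRingEnd ℂ) (M k l)).re) i
  simp only [h1, h2, h3]
  -- collapse over k and j
  have g1 : ∀ i j : Fin d, ∑ k, (if j = k then (1:ℝ) else 0)
        * (M i j * (starRingEnd ℂ) (M k i)).re
      = (M i j * (starRingEnd ℂ) (M j i)).re := fun i j =>
    collapse_l (fun k => (M i j * (starRingEnd ℂ) (M k i)).re) j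
  have g2 : ∀ i j : Fin d, ∑ k, (if i = k then (1:ℝ) else 0)
        * (M i j * (starRingEnd ℂ) (M k j)).re
      = (M i j * (starRingEnd ℂ) (M i j)).re := fun i j =>
    collapse_l (fun k => (M i j * (starRingEnd ℂ) (M k j)).re) i
  have g0 : ∀ i j : Fin d, (if i = j then (1:ℝ) else 0)
        * (∑ k, (M i j * (starRingEnd ℂ) (M k k)).re)
      = if i = j then (∑ k, (M i i * (starRingEnd ℂ) (M k k)).re) else 0 := by
    intro i j
    rcases eq_or_ne i j with rfl | hij
    · simp
    · simp [hij]
  simp only [g1, g2, g0]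
  rw [Finset.sum_congr rfl fun i _ => Finset.sum_ite_eq Finset.univ i
    (fun j => ∑ k, (M i i * (starRingEnd ℂ) (M k k)).re)]
  simp only [Finset.mem_univ, if_true]
  ring

lemma M_symm {d : ℕ} (U : Matrix (Fin d) (Fin d) ℂ) : (Uᵀ * U)ᵀ = Uᵀ * U := by
  rw [Matrix.transpose_mul, Matrix.transpose_transpose]

lemma M_unitary {d : ℕ} {U : Matrix (Fin d) (Fin d) ℂ}
    (hU : U ∈ Matrix.unitaryGroup (Fin d) ℂ) : (Uᵀ * U) * (Uᵀ * U)ᴴ = 1 := by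
  have h1 : Uᴴ * U = 1 := by
    have := Matrix.mem_unitaryGroup_iff'.mp hU
    rwa [Matrix.star_eq_conjTranspose] at this
  have h2 : U * Uᴴ = 1 := by
    have := Matrix.mem_unitaryGroup_iff.mp hU
    rwa [Matrix.star_eq_conjTranspose] at this
  calc (Uᵀ * U) * (Uᵀ * U)ᴴ = Uᵀ * (U * Uᴴ) * (Uᵀ)ᴴ := by
        rw [Matrix.conjTranspose_mul]; noncomm_ring
    _ = Uᵀ * (Uᴴ)ᵀ := by
        rw [h2, Matrix.mul_one]
        congr 1
    _ = (Uᴴ * U)ᵀ := by rw [Matrix.transpose_mul]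
    _ = 1 := by rw [h1, Matrix.transpose_one]

lemma sum_normSq_M {d : ℕ} {U : Matrix (Fin d) (Fin d) ℂ}
    (hU : U ∈ Matrix.unitaryGroup (Fin d) ℂ) :
    ∑ i, ∑ j, ((Uᵀ * U) i j * (starRingEnd ℂ) ((Uᵀ * U) i j)).re = (d : ℝ) := by
  set M := Uᵀ * U with hM
  have h : ∀ i : Fin d, ∑ j, (M i j * (starRingEnd ℂ) (M i j)).re
      = ((M * Mᴴ) i i).re := by
    intro i
    rw [Matrix.mul_apply, Complex.re_sum]
    exact Finset.sum_congr rfl fun j _ => by rw [Matrix.conjTranspose_apply, Complex.star_def]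
  rw [Finset.sum_congr rfl fun i _ => h i]
  rw [M_unitary hU]
  simp [Matrix.one_apply]

lemma trace_conj {d : ℕ} (U : Matrix (Fin d) (Fin d) ℂ) :
    (Uᴴ * U.map (starRingEnd ℂ)).trace = (starRingEnd ℂ) ((Uᵀ * U).trace) := by
  have h : Uᴴ * U.map (starRingEnd ℂ) = (Uᵀ * U).map (starRingEnd ℂ) := by
    ext i j
    simp only [Matrix.mul_apply, Matrix.map_apply, Matrix.conjTranspose_apply,
      Matrix.transpose_apply, Complex.star_def, map_sum, _root_.map_mul]
  rw [h, Matrix.trace, Matrix.trace, map_sum]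
  apply Finset.sum_congr rfl
  intro i _
  simp [Matrix.diag, Matrix.map_apply]

lemma normSq_expand {d : ℕ} (M : Matrix (Fin d) (Fin d) ℂ) (w : Fin d → ℝ) :
    Complex.normSq (∑ i, ∑ j, M i j * ((w i : ℂ) * (w j : ℂ)))
      = ∑ i, ∑ j, ∑ k, ∑ l, (M i j * (starRingEnd ℂ) (M k l)).re
          * (w i * w j * w k * w l) := by
  have h0 : ∀ z : ℂ, Complex.normSq z = (z * (starRingEnd ℂ) z).re := by
    intro z; rw [Complex.mul_conj]; simp
  rw [h0]
  simp only [map_sum, _root_.map_mul, Complex.conj_ofReal, Finset.sum_mul, Finset.mul_sum,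
    Complex.re_sum]
  apply Finset.sum_congr rfl; intro i _
  apply Finset.sum_congr rfl; intro j _
  apply Finset.sum_congr rfl; intro k _
  apply Finset.sum_congr rfl; intro l _
  rw [show M k l * ((w k : ℂ) * (w l : ℂ)) * ((starRingEnd ℂ) (M i j) * ((w i : ℂ) * (w j : ℂ)))
      = (starRingEnd ℂ) (M i j * (starRingEnd ℂ) (M k l)) * ((w i * w j * w k * w l : ℝ) : ℂ) from by
    rw [_root_.map_mul, Complex.conj_conj]; push_cast; ring]
  simp [Complex.mul_re, Complex.conj_re, Complex.conj_im]

/-- **Imaginarity-generating power on real pure states.**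
For `d ≥ 2`, a `d×d` unitary `U` and a real unit vector `v`, the Haar average over the
orthogonal group of the imaginarity of `U (Ov)(Ov)ᵀ U†` equals
`(d² − |Tr(U†U*)|²)/(2d(d+2))`. -/
theorem IGP_pure_states
    (d : ℕ) (hd : 2 ≤ d)
    (U : Matrix (Fin d) (Fin d) ℂ) (hU : U ∈ Matrix.unitaryGroup (Fin d) ℂ)
    (v : Fin d → ℝ) (hv : ∑ i, v i ^ 2 = 1)
    (μ : Measure (Matrix.orthogonalGroup (Fin d) ℝ))
    [μ.IsHaarMeasure] [IsProbabilityMeasure μ] :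
    ∫ O : Matrix.orthogonalGroup (Fin d) ℝ,
        Imag (U * (Matrix.vecMulVec ((O : Matrix (Fin d) (Fin d) ℝ).mulVec v)
              ((O : Matrix (Fin d) (Fin d) ℝ).mulVec v)).map Complex.ofReal * Uᴴ) ∂μ
      = ((d : ℝ) ^ 2 - ‖(Uᴴ * U.map (starRingEnd ℂ)).trace‖ ^ 2) /
          (2 * d * (d + 2)) := by
  classical
  obtain ⟨b, hb, hmom⟩ := moment_master hd hv μ
  set M : Matrix (Fin d) (Fin d) ℂ := Uᵀ * U with hM
  -- pointwise formula for the integrand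
  have hpoint : ∀ O : Matrix.orthogonalGroup (Fin d) ℝ,
      Imag (U * (Matrix.vecMulVec ((O : Matrix (Fin d) (Fin d) ℝ).mulVec v)
            ((O : Matrix (Fin d) (Fin d) ℝ).mulVec v)).map Complex.ofReal * Uᴴ)
      = 1/2 - 1/2 * (∑ i, ∑ j, ∑ k, ∑ l, (M i j * (starRingEnd ℂ) (M k l)).re
          * (wv v O i * wv v O j * wv v O k * wv v O l)) := by
    intro O
    rw [imag_state hU (w := (O : Matrix (Fin d) (Fin d) ℝ).mulVec v) (by
        exact wv_norm hv O), normSq_expand]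
    rfl
  rw [integral_congr_ae (Filter.Eventually.of_forall hpoint)]
  -- integrability of the quartic polynomial
  have hFint : Integrable (fun O => ∑ i, ∑ j, ∑ k, ∑ l,
      (M i j * (starRingEnd ℂ) (M k l)).re
        * (wv v O i * wv v O j * wv v O k * wv v O l)) μ :=
    integrable_finset_sum _ (fun i _ => integrable_finset_sum _ (fun j _ =>
      integrable_finset_sum _ (fun k _ => integrable_finset_sum _ (fun l _ =>
        (wv_integrable hv μ i j k l).const_mul _))))
  have hhalf : Integrable (fun O => (1/2 : ℝ) * ∑ i, ∑ j, ∑ k, ∑ l,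
      (M i j * (starRingEnd ℂ) (M k l)).re
        * (wv v O i * wv v O j * wv v O k * wv v O l)) μ := hFint.const_mul _
  rw [integral_sub (integrable_const _) hhalf, integral_const, integral_const_mul]
  -- compute the integral of the quartic polynomial
  have hIF : ∫ O, (∑ i, ∑ j, ∑ k, ∑ l, (M i j * (starRingEnd ℂ) (M k l)).re
        * (wv v O i * wv v O j * wv v O k * wv v O l)) ∂μ
      = b * ((∑ i, ∑ k, (M i i * (starRingEnd ℂ) (M k k)).re)
          + (∑ i, ∑ j, (M i j * (starRingEnd ℂ) (M i j)).re)
          + (∑ i, ∑ j, (M i j * (starRingEnd ℂ) (M j i)).re)) := by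
    rw [integral_finset_sum _ (fun i _ => integrable_finset_sum _ (fun j _ =>
      integrable_finset_sum _ (fun k _ => integrable_finset_sum _ (fun l _ =>
        (wv_integrable hv μ i j k l).const_mul _))))]
    rw [Finset.sum_congr rfl fun i _ => integral_finset_sum _ (fun j _ =>
      integrable_finset_sum _ (fun k _ => integrable_finset_sum _ (fun l _ =>
        (wv_integrable hv μ i j k l).const_mul _)))]
    rw [Finset.sum_congr rfl fun i _ => Finset.sum_congr rfl fun j _ =>
      integral_finset_sum _ (fun k _ => integrable_finset_sum _ (fun l _ =>
        (wv_integrable hv μ i j k l).const_mul _))]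
    rw [Finset.sum_congr rfl fun i _ => Finset.sum_congr rfl fun j _ =>
      Finset.sum_congr rfl fun k _ =>
      integral_finset_sum _ (fun l _ => (wv_integrable hv μ i j k l).const_mul _)]
    rw [Finset.sum_congr rfl fun i _ => Finset.sum_congr rfl fun j _ =>
      Finset.sum_congr rfl fun k _ => Finset.sum_congr rfl fun l _ =>
      integral_const_mul _ _]
    rw [Finset.sum_congr rfl fun i _ => Finset.sum_congr rfl fun j _ =>
      Finset.sum_congr rfl fun k _ => Finset.sum_congr rfl fun l _ =>
      congrArg _ (hmom i j k l)]
    exact delta_sum M b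
  rw [hIF]
  -- identify the trace quantities
  have hA : (∑ i, ∑ k, (M i i * (starRingEnd ℂ) (M k k)).re)
      = Complex.normSq (M.trace) := by
    have h1 : (∑ i, ∑ k, (M i i * (starRingEnd ℂ) (M k k)).re)
        = ((M.trace) * (starRingEnd ℂ) (M.trace)).re := by
      rw [Matrix.trace, map_sum, Finset.sum_mul_sum]
      simp only [Complex.re_sum]
      rfl
    rw [h1, Complex.mul_conj]
    simp
  have hB : (∑ i, ∑ j, (M i j * (starRingEnd ℂ) (M i j)).re) = (d : ℝ) :=
    sum_normSq_M hU
  have hC : (∑ i, ∑ j, (M i j * (starRingEnd ℂ) (M j i)).re) = (d : ℝ) := by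
    have hsym : ∀ i j : Fin d, M j i = M i j := by
      intro i j
      show (Uᵀ * U) j i = (Uᵀ * U) i j
      conv_lhs => rw [← M_symm U]
      rw [Matrix.transpose_apply]
    rw [Finset.sum_congr rfl fun i _ => Finset.sum_congr rfl fun j _ => by rw [hsym i j]]
    exact sum_normSq_M hU
  rw [hA, hB, hC]
  -- the trace in the statement
  have habs : ‖(Uᴴ * U.map (starRingEnd ℂ)).trace‖ ^ 2
      = Complex.normSq (M.trace) := by
    rw [Complex.sq_norm, trace_conj U, Complex.normSq_conj]
  rw [habs]
  -- final arithmetic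
  have hd0 : (0 : ℝ) < (d : ℝ) := by exact_mod_cast (by omega : 0 < d)
  have hne1 : (d : ℝ) ≠ 0 := ne_of_gt hd0
  have hne2 : (d : ℝ) + 2 ≠ 0 := by positivity
  simp only [measure_univ, probReal_univ, ENNReal.toReal_one, smul_eq_mul, one_mul]
  field_simp
  linear_combination (-(Complex.normSq (M.trace)) - 2*(d:ℝ)) * hb
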